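/- arXiv:2102.05779 — 2 statements merged into one kernel-verified Lean document; each statement's English description precedes it below -/
import Mathlib

section
/- Let p = 6 and λ = 2cos(π/6) = √3, so U = ((√3,-1),(1,0)). Define q(z) = -1/(z-1) + 1/(z-1)² - 1/(z+1) - 1/(z+1)² + 2/z. Then q satisfies the rational period function relations of weight 4 on the Hecke group G_6: for every z ∈ ℂ with Im z ≠ 0, q(z) + z^{-4}·q(-1/z) = 0 and Σ_{j=0}^{5} (q |_{4} U^j)(z) = 0. (Its nonzero poles {1, -1} form a Hecke-symmetric irreducible system of poles, and this gives an RPF of even weight-parameter k = 2 with those poles.) -/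
/-- The weight-`2k` slash operator: for a real 2×2 matrix `M = ((a,b),(c,d))`,
`(f ∣_{2k} M)(z) = (cz+d)^{-2k} · f((az+b)/(cz+d))`. -/
noncomputable def slash (k : ℕ) (M : Matrix (Fin 2) (Fin 2) ℝ)
    (f : ℂ → ℂ) (z : ℂ) : ℂ :=
  ((M 1 0 : ℂ) * z + (M 1 1 : ℂ)) ^ (-(2 * (k : ℤ))) *
    f (((M 0 0 : ℂ) * z + (M 0 1 : ℂ)) / ((M 1 0 : ℂ) * z + (M 1 1 : ℂ)))

set_option maxHeartbeats 2000000 in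
theorem comb (B4 a1 a2 a3 a4 a5 d1 d2 d3 d4 d5 r1 r2 r3 r4 r5 r6 e1 e2 e3 e4 e5 e6 : ℂ)
    (hB4 : B4 ≠ 0) (hd1 : d1 ≠ 0) (hd2 : d2 ≠ 0) (hd3 : d3 ≠ 0) (hd4 : d4 ≠ 0) (hd5 : d5 ≠ 0)
    (he1 : e1 ≠ 0) (he2 : e2 ≠ 0) (he3 : e3 ≠ 0) (he4 : e4 ≠ 0) (he5 : e5 ≠ 0) (he6 : e6 ≠ 0)
    (key : (a1*(d2*d3*d4*d5) + a2*(d1*d3*d4*d5) + a3*(d1*d2*d4*d5) + a4*(d1*d2*d3*d5) +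
        a5*(d1*d2*d3*d4)) * (e1*e2*e3*e4*e5*e6)
      = (r1*(e2*e3*e4*e5*e6) + r2*(e1*e3*e4*e5*e6) + r3*(e1*e2*e4*e5*e6) + r4*(e1*e2*e3*e5*e6) +
        r5*(e1*e2*e3*e4*e6) + r6*(e1*e2*e3*e4*e5)) * (B4*(d1*d2*d3*d4*d5))) :
    B4⁻¹ * (a1/d1 + a2/d2 + a3/d3 + a4/d4 + a5/d5)
      = r1/e1 + r2/e2 + r3/e3 + r4/e4 + r5/e5 + r6/e6 := by
  rw [div_add_div _ _ hd1 hd2, div_add_div _ _ (mul_ne_zero hd1 hd2) hd3,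
    div_add_div _ _ (mul_ne_zero (mul_ne_zero hd1 hd2) hd3) hd4,
    div_add_div _ _ (mul_ne_zero (mul_ne_zero (mul_ne_zero hd1 hd2) hd3) hd4) hd5,
    inv_mul_eq_div, div_div,
    div_add_div _ _ he1 he2, div_add_div _ _ (mul_ne_zero he1 he2) he3,
    div_add_div _ _ (mul_ne_zero (mul_ne_zero he1 he2) he3) he4,
    div_add_div _ _ (mul_ne_zero (mul_ne_zero (mul_ne_zero he1 he2) he3) he4) he5,
    div_add_div _ _ (mul_ne_zero (mul_ne_zero (mul_ne_zero (mul_ne_zero he1 he2) he3) he4) he5) he6,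
    div_eq_div_iff
      (mul_ne_zero (mul_ne_zero (mul_ne_zero (mul_ne_zero (mul_ne_zero hd1 hd2) hd3) hd4) hd5) hB4)
      (mul_ne_zero (mul_ne_zero (mul_ne_zero (mul_ne_zero (mul_ne_zero he1 he2) he3) he4) he5) he6)]
  linear_combination key

theorem qAB (A B : ℂ) (hB : B ≠ 0) :
    -1 / (A/B - 1) + 1 / (A/B - 1) ^ 2 - 1 / (A/B + 1) - 1 / (A/B + 1) ^ 2 + 2 / (A/B)
    = (-B)/(A - B) + B^2/(A - B)^2 + (-B)/(A + B) + (-(B^2))/(A + B)^2 + (2*B)/(A) := by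
  rw [div_sub_one hB, div_add_one hB, div_pow, div_pow, neg_div, one_div_div, one_div_div,
    one_div_div, one_div_div, div_div_eq_mul_div]
  ring


set_option maxHeartbeats 4000000 in
/-- Let `p = 6` and `λ = 2cos(π/6) = √3`, so `U = ((√3,-1),(1,0))`.
Define `q(z) = -1/(z-1) + 1/(z-1)² - 1/(z+1) - 1/(z+1)² + 2/z`.  Then `q`
satisfies the rational period function relations of weight `4` on the Hecke
group `G_6`: for every `z ∈ ℂ` with `Im z ≠ 0`, `q(z) + z^{-4}·q(-1/z) = 0` and
`Σ_{j=0}^{5} (q ∣_4 U^j)(z) = 0`. -/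
theorem stmt16
    (lam : ℝ) (hlam : lam = 2 * Real.cos (Real.pi / 6))
    (U : Matrix (Fin 2) (Fin 2) ℝ) (hU : U = !![lam, -1; 1, 0])
    (q : ℂ → ℂ)
    (hq : ∀ z : ℂ, q z =
      -1 / (z - 1) + 1 / (z - 1) ^ 2 - 1 / (z + 1) - 1 / (z + 1) ^ 2 + 2 / z) :
    ∀ z : ℂ, z.im ≠ 0 →
      q z + z ^ (-4 : ℤ) * q (-1 / z) = 0 ∧
      ∑ j ∈ Finset.range 6, slash 2 (U ^ j) q z = 0 := by
  have hs3 : Real.sqrt 3 * Real.sqrt 3 = 3 := Real.mul_self_sqrt (by norm_num)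
  have hl : lam = Real.sqrt 3 := by rw [hlam, Real.cos_pi_div_six]; ring
  subst hl
  have hU2 : U^2 = !![2, -Real.sqrt 3; Real.sqrt 3, -1] := by
    rw [pow_two, hU, Matrix.mul_fin_two]; norm_num [hs3]
  have hU3 : U^3 = !![Real.sqrt 3, -2; 2, -Real.sqrt 3] := by
    rw [pow_succ, hU2, hU, Matrix.mul_fin_two]; norm_num [hs3, show (2:ℝ)*Real.sqrt 3 + -Real.sqrt 3 = Real.sqrt 3 by ring]
  have hU4 : U^4 = !![1, -Real.sqrt 3; Real.sqrt 3, -2] := by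
    rw [pow_succ, hU3, hU, Matrix.mul_fin_two]; norm_num [hs3, show (2:ℝ)*Real.sqrt 3 + -Real.sqrt 3 = Real.sqrt 3 by ring]
  have hU5 : U^5 = !![0, -1; 1, -Real.sqrt 3] := by
    rw [pow_succ, hU4, hU, Matrix.mul_fin_two]; norm_num [hs3]
  have hs1 : (1:ℝ) < Real.sqrt 3 := by
    nlinarith [Real.sq_sqrt (by norm_num : (3:ℝ) ≥ 0), Real.sqrt_nonneg 3]
  have hs2 : Real.sqrt 3 < 2 := by
    nlinarith [Real.sq_sqrt (by norm_num : (3:ℝ) ≥ 0), Real.sqrt_nonneg 3]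
  have hw : (Real.sqrt 3:ℂ)^2 = 3 := by
    rw [sq, ← Complex.ofReal_mul, hs3]; norm_num
  intro z hz
  have hlin : ∀ a b : ℝ, a ≠ 0 → (a:ℂ)*z + (b:ℂ) ≠ 0 := by
    intro a b ha h
    apply hz
    have h2 := congrArg Complex.im h
    simp [Complex.add_im, Complex.mul_im] at h2
    rcases h2 with h2 | h2
    · exact absurd h2 ha
    · exact h2
  have hlin' : ∀ (u : ℂ) (a b : ℝ), a ≠ 0 → u = (a:ℂ)*z + (b:ℂ) → u ≠ 0 :=
    fun u a b ha hu => hu ▸ hlin a b ha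
  have nB0 : (z : ℂ) ≠ 0 :=
    hlin' _ (1) (0) (ne_of_gt (by nlinarith)) (by push_cast; ring)
  have nzm1 : (z - 1 : ℂ) ≠ 0 :=
    hlin' _ (1) (-1) (ne_of_gt (by nlinarith)) (by push_cast; ring)
  have nzp1 : (z + 1 : ℂ) ≠ 0 :=
    hlin' _ (1) (1) (ne_of_gt (by nlinarith)) (by push_cast; ring)
  have n0d1 : (-1 - z : ℂ) ≠ 0 :=
    hlin' _ (-1) (-1) (ne_of_lt (by nlinarith)) (by push_cast; ring)
  have n0d3 : (-1 + z : ℂ) ≠ 0 :=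
    hlin' _ (1) (-1) (ne_of_gt (by nlinarith)) (by push_cast; ring)
  have n1d1 : ((Real.sqrt 3:ℂ)*z - 1 - z : ℂ) ≠ 0 :=
    hlin' _ (Real.sqrt 3 - 1) (-1) (ne_of_gt (by nlinarith)) (by push_cast; ring)
  have n1d3 : ((Real.sqrt 3:ℂ)*z - 1 + z : ℂ) ≠ 0 :=
    hlin' _ (Real.sqrt 3 + 1) (-1) (ne_of_gt (by nlinarith)) (by push_cast; ring)
  have nA1 : ((Real.sqrt 3:ℂ)*z - 1 : ℂ) ≠ 0 :=
    hlin' _ (Real.sqrt 3) (-1) (ne_of_gt (by nlinarith)) (by push_cast; ring)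
  have n2d1 : (2*z - (Real.sqrt 3:ℂ) - ((Real.sqrt 3:ℂ)*z - 1) : ℂ) ≠ 0 :=
    hlin' _ (2 - Real.sqrt 3) (1 - Real.sqrt 3) (ne_of_gt (by nlinarith)) (by push_cast; ring)
  have n2d3 : (2*z - (Real.sqrt 3:ℂ) + ((Real.sqrt 3:ℂ)*z - 1) : ℂ) ≠ 0 :=
    hlin' _ (2 + Real.sqrt 3) (-Real.sqrt 3 - 1) (ne_of_gt (by nlinarith)) (by push_cast; ring)
  have nA2 : (2*z - (Real.sqrt 3:ℂ) : ℂ) ≠ 0 :=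
    hlin' _ (2) (-Real.sqrt 3) (ne_of_gt (by nlinarith)) (by push_cast; ring)
  have n3d1 : ((Real.sqrt 3:ℂ)*z - 2 - (2*z - (Real.sqrt 3:ℂ)) : ℂ) ≠ 0 :=
    hlin' _ (Real.sqrt 3 - 2) (Real.sqrt 3 - 2) (ne_of_lt (by nlinarith)) (by push_cast; ring)
  have n3d3 : ((Real.sqrt 3:ℂ)*z - 2 + (2*z - (Real.sqrt 3:ℂ)) : ℂ) ≠ 0 :=
    hlin' _ (Real.sqrt 3 + 2) (-2 - Real.sqrt 3) (ne_of_gt (by nlinarith)) (by push_cast; ring)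
  have nA3 : ((Real.sqrt 3:ℂ)*z - 2 : ℂ) ≠ 0 :=
    hlin' _ (Real.sqrt 3) (-2) (ne_of_gt (by nlinarith)) (by push_cast; ring)
  have n4d1 : (z - (Real.sqrt 3:ℂ) - ((Real.sqrt 3:ℂ)*z - 2) : ℂ) ≠ 0 :=
    hlin' _ (1 - Real.sqrt 3) (2 - Real.sqrt 3) (ne_of_lt (by nlinarith)) (by push_cast; ring)
  have n4d3 : (z - (Real.sqrt 3:ℂ) + ((Real.sqrt 3:ℂ)*z - 2) : ℂ) ≠ 0 :=
    hlin' _ (1 + Real.sqrt 3) (-Real.sqrt 3 - 2) (ne_of_gt (by nlinarith)) (by push_cast; ring)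
  have nA4 : (z - (Real.sqrt 3:ℂ) : ℂ) ≠ 0 :=
    hlin' _ (1) (-Real.sqrt 3) (ne_of_gt (by nlinarith)) (by push_cast; ring)
  have n5d1 : (-1 - (z - (Real.sqrt 3:ℂ)) : ℂ) ≠ 0 :=
    hlin' _ (-1) (Real.sqrt 3 - 1) (ne_of_lt (by nlinarith)) (by push_cast; ring)
  have n5d3 : (-1 + (z - (Real.sqrt 3:ℂ)) : ℂ) ≠ 0 :=
    hlin' _ (1) (-1 - Real.sqrt 3) (ne_of_gt (by nlinarith)) (by push_cast; ring)
  have ne1b : (2*z - 1 - (Real.sqrt 3:ℂ) : ℂ) ≠ 0 :=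
    hlin' _ (2) (-1 - Real.sqrt 3) (ne_of_gt (by nlinarith)) (by push_cast; ring)
  have ne1c : (2*z + 1 - (Real.sqrt 3:ℂ) : ℂ) ≠ 0 :=
    hlin' _ (2) (1 - Real.sqrt 3) (ne_of_gt (by nlinarith)) (by push_cast; ring)
  have ne1d : (3*z - (Real.sqrt 3:ℂ) : ℂ) ≠ 0 :=
    hlin' _ (3) (-Real.sqrt 3) (ne_of_gt (by nlinarith)) (by push_cast; ring)
  have ne2b : (z - 1 - (Real.sqrt 3:ℂ) : ℂ) ≠ 0 :=
    hlin' _ (1) (-1 - Real.sqrt 3) (ne_of_gt (by nlinarith)) (by push_cast; ring)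
  have ne2c : (z + 1 - (Real.sqrt 3:ℂ) : ℂ) ≠ 0 :=
    hlin' _ (1) (1 - Real.sqrt 3) (ne_of_gt (by nlinarith)) (by push_cast; ring)
  have ne2d : (2*z - (Real.sqrt 3:ℂ) : ℂ) ≠ 0 :=
    hlin' _ (2) (-Real.sqrt 3) (ne_of_gt (by nlinarith)) (by push_cast; ring)
  have ne3d : (3*z - 2*(Real.sqrt 3:ℂ) : ℂ) ≠ 0 :=
    hlin' _ (3) (-2*Real.sqrt 3) (ne_of_gt (by nlinarith)) (by push_cast; ring)
  have none1 : (1:ℂ) ≠ 0 := one_ne_zero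
  have nonem1 : (-1:ℂ) ≠ 0 := by norm_num
  have hc1 := comb ((z)^4) (-(z)) ((z)^2) (-(z)) (-((z)^2)) (2*(z)) (((Real.sqrt 3:ℂ)*z - 1) - (z)) ((((Real.sqrt 3:ℂ)*z - 1) - (z))^2) (((Real.sqrt 3:ℂ)*z - 1) + (z)) ((((Real.sqrt 3:ℂ)*z - 1) + (z))^2) ((Real.sqrt 3:ℂ)*z - 1) ((-2)) ((-4)) (4) ((-4)) ((-4)) (18) (z) (2*z - 1 - (Real.sqrt 3:ℂ)) ((2*z - 1 - (Real.sqrt 3:ℂ))^2) (2*z + 1 - (Real.sqrt 3:ℂ)) ((2*z + 1 - (Real.sqrt 3:ℂ))^2) (3*z - (Real.sqrt 3:ℂ))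
    (pow_ne_zero 4 nB0) n1d1 (pow_ne_zero 2 n1d1) n1d3 (pow_ne_zero 2 n1d3) nA1
    nB0 ne1b (pow_ne_zero 2 ne1b) ne1c (pow_ne_zero 2 ne1c) ne1d
    (by linear_combination ((6*z^5 + (-10)*z^5*(Real.sqrt 3:ℂ)^2 + 10*z^5*(Real.sqrt 3:ℂ)^4 + (-6)*z^5*(Real.sqrt 3:ℂ)^6 + (-6)*z^6*(Real.sqrt 3:ℂ) + (-6)*z^6*(Real.sqrt 3:ℂ)^3 + 14*z^6*(Real.sqrt 3:ℂ)^5 + 30*z^6*(Real.sqrt 3:ℂ)^7 + (-36)*z^7 + 66*z^7*(Real.sqrt 3:ℂ)^2 + (-110)*z^7*(Real.sqrt 3:ℂ)^4 + (-210)*z^7*(Real.sqrt 3:ℂ)^6 + (-62)*z^7*(Real.sqrt 3:ℂ)^8 + 52*z^8*(Real.sqrt 3:ℂ) + 216*z^8*(Real.sqrt 3:ℂ)^3 + 904*z^8*(Real.sqrt 3:ℂ)^5 + 520*z^8*(Real.sqrt 3:ℂ)^7 + 68*z^8*(Real.sqrt 3:ℂ)^9 + 42*z^9 + (-454)*z^9*(Real.sqrt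 3:ℂ)^2 + (-2040)*z^9*(Real.sqrt 3:ℂ)^4 + (-2112)*z^9*(Real.sqrt 3:ℂ)^6 + (-610)*z^9*(Real.sqrt 3:ℂ)^8 + (-42)*z^9*(Real.sqrt 3:ℂ)^10 + 70*z^10*(Real.sqrt 3:ℂ) + 2574*z^10*(Real.sqrt 3:ℂ)^3 + 4532*z^10*(Real.sqrt 3:ℂ)^5 + 2404*z^10*(Real.sqrt 3:ℂ)^7 + 390*z^10*(Real.sqrt 3:ℂ)^9 + 14*z^10*(Real.sqrt 3:ℂ)^11 + 84*z^11 + (-1214)*z^11*(Real.sqrt 3:ℂ)^2 + (-4818)*z^11*(Real.sqrt 3:ℂ)^4 + (-4892)*z^11*(Real.sqrt 3:ℂ)^6 + (-1504)*z^11*(Real.sqrt 3:ℂ)^8 + (-134)*z^11*(Real.sqrt 3:ℂ)^10 + (-2)*z^11*(Real.sqrt 3:ℂ)^12 + 132*z^12*(Real.sqrt 3:ℂ) + 1428*z^12*(Real.sqrt 3:ℂ)^3 + 4728*z^12*(Real.sqrt 3:ℂ)^5 + 2904*z^12*(Real.sqrt 3:ℂ)^7 + 516*z^12*(Real.sqrt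 3:ℂ)^9 + 20*z^12*(Real.sqrt 3:ℂ)^11 + (-288)*z^13 + 768*z^13*(Real.sqrt 3:ℂ)^2 + (-1104)*z^13*(Real.sqrt 3:ℂ)^4 + (-2544)*z^13*(Real.sqrt 3:ℂ)^6 + (-976)*z^13*(Real.sqrt 3:ℂ)^8 + (-80)*z^13*(Real.sqrt 3:ℂ)^10 + 32*z^14*(Real.sqrt 3:ℂ) + (-576)*z^14*(Real.sqrt 3:ℂ)^3 + 320*z^14*(Real.sqrt 3:ℂ)^5 + 832*z^14*(Real.sqrt 3:ℂ)^7 + 160*z^14*(Real.sqrt 3:ℂ)^9 + 192*z^15 + (-416)*z^15*(Real.sqrt 3:ℂ)^2 + 480*z^15*(Real.sqrt 3:ℂ)^4 + (-96)*z^15*(Real.sqrt 3:ℂ)^6 + (-160)*z^15*(Real.sqrt 3:ℂ)^8 + (-64)*z^16*(Real.sqrt 3:ℂ) + 192*z^16*(Real.sqrt 3:ℂ)^3 + (-192)*z^16*(Real.sqrt 3:ℂ)^5 + 64*z^16*(Real.sqrt 3:ℂ)^7)) * hw)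
  have hc2 := comb (((Real.sqrt 3:ℂ)*z - 1)^4) (-((Real.sqrt 3:ℂ)*z - 1)) (((Real.sqrt 3:ℂ)*z - 1)^2) (-((Real.sqrt 3:ℂ)*z - 1)) (-(((Real.sqrt 3:ℂ)*z - 1)^2)) (2*((Real.sqrt 3:ℂ)*z - 1)) ((2*z - (Real.sqrt 3:ℂ)) - ((Real.sqrt 3:ℂ)*z - 1)) (((2*z - (Real.sqrt 3:ℂ)) - ((Real.sqrt 3:ℂ)*z - 1))^2) ((2*z - (Real.sqrt 3:ℂ)) + ((Real.sqrt 3:ℂ)*z - 1)) (((2*z - (Real.sqrt 3:ℂ)) + ((Real.sqrt 3:ℂ)*z - 1))^2) (2*z - (Real.sqrt 3:ℂ)) ((-18)) ((-1)) (1) ((-1)) ((-1)) (16) (3*z - (Real.sqrt 3:ℂ)) (z - 1 - (Real.sqrt 3:ℂ)) ((z - 1 - (Real.sqrt 3:ℂ))^2) (z + 1 - (Real.sqrt 3:ℂ)) ((z + 1 - (Real.sqrt 3:ℂ))^2) (2*z - (Real.sqrt 3:ℂ))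
    (pow_ne_zero 4 nA1) n2d1 (pow_ne_zero 2 n2d1) n2d3 (pow_ne_zero 2 n2d3) nA2
    ne1d ne2b (pow_ne_zero 2 ne2b) ne2c (pow_ne_zero 2 ne2c) ne2d
    (by linear_combination ((4*(Real.sqrt 3:ℂ)^4 + (-16)*(Real.sqrt 3:ℂ)^6 + 24*(Real.sqrt 3:ℂ)^8 + (-16)*(Real.sqrt 3:ℂ)^10 + 4*(Real.sqrt 3:ℂ)^12 + (-6)*z*(Real.sqrt 3:ℂ) + 2*z*(Real.sqrt 3:ℂ)^3 + 68*z*(Real.sqrt 3:ℂ)^5 + (-140)*z*(Real.sqrt 3:ℂ)^7 + 82*z*(Real.sqrt 3:ℂ)^9 + 10*z*(Real.sqrt 3:ℂ)^11 + (-16)*z*(Real.sqrt 3:ℂ)^13 + 12*z^2 + (-20)*z^2*(Real.sqrt 3:ℂ)^2 + (-222)*z^2*(Real.sqrt 3:ℂ)^4 + 584*z^2*(Real.sqrt 3:ℂ)^6 + (-328)*z^2*(Real.sqrt 3:ℂ)^8 + (-156)*z^2*(Real.sqrt 3:ℂ)^10 + 106*z^2*(Real.sqrt 3:ℂ)^12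 + 24*z^2*(Real.sqrt 3:ℂ)^14 + 54*z^3*(Real.sqrt 3:ℂ) + 390*z^3*(Real.sqrt 3:ℂ)^3 + (-1522)*z^3*(Real.sqrt 3:ℂ)^5 + 820*z^3*(Real.sqrt 3:ℂ)^7 + 986*z^3*(Real.sqrt 3:ℂ)^9 + (-506)*z^3*(Real.sqrt 3:ℂ)^11 + (-206)*z^3*(Real.sqrt 3:ℂ)^13 + (-16)*z^3*(Real.sqrt 3:ℂ)^15 + (-108)*z^4 + (-318)*z^4*(Real.sqrt 3:ℂ)^2 + 2818*z^4*(Real.sqrt 3:ℂ)^4 + (-1714)*z^4*(Real.sqrt 3:ℂ)^6 + (-3532)*z^4*(Real.sqrt 3:ℂ)^8 + 1638*z^4*(Real.sqrt 3:ℂ)^10 + 1154*z^4*(Real.sqrt 3:ℂ)^12 + 122*z^4*(Real.sqrt 3:ℂ)^14 + 4*z^4*(Real.sqrt 3:ℂ)^16 + 114*z^5*(Real.sqrt 3:ℂ) + (-3844)*z^5*(Real.sqrt 3:ℂ)^3 + 3256*z^5*(Real.sqrt 3:ℂ)^5 + 8796*z^5*(Real.sqrt 3:ℂ)^7 + (-4182)*z^5*(Real.sqrt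 3:ℂ)^9 + (-4484)*z^5*(Real.sqrt 3:ℂ)^11 + (-612)*z^5*(Real.sqrt 3:ℂ)^13 + (-4)*z^5*(Real.sqrt 3:ℂ)^15 + 324*z^6 + 3160*z^6*(Real.sqrt 3:ℂ)^2 + (-5128)*z^6*(Real.sqrt 3:ℂ)^4 + (-16074)*z^6*(Real.sqrt 3:ℂ)^6 + 8848*z^6*(Real.sqrt 3:ℂ)^8 + 13092*z^6*(Real.sqrt 3:ℂ)^10 + 2176*z^6*(Real.sqrt 3:ℂ)^12 + (-82)*z^6*(Real.sqrt 3:ℂ)^14 + (-12)*z^6*(Real.sqrt 3:ℂ)^16 + (-1822)*z^7*(Real.sqrt 3:ℂ) + 7306*z^7*(Real.sqrt 3:ℂ)^3 + 20898*z^7*(Real.sqrt 3:ℂ)^5 + (-15580)*z^7*(Real.sqrt 3:ℂ)^7 + (-29670)*z^7*(Real.sqrt 3:ℂ)^9 + (-5906)*z^7*(Real.sqrt 3:ℂ)^11 + 594*z^7*(Real.sqrt 3:ℂ)^13 + 84*z^7*(Real.sqrt 3:ℂ)^15 + (-228)*z^8 + (-6466)*z^8*(Real.sqrt 3:ℂ)^2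 + (-19806)*z^8*(Real.sqrt 3:ℂ)^4 + 23854*z^8*(Real.sqrt 3:ℂ)^6 + 52320*z^8*(Real.sqrt 3:ℂ)^8 + 12870*z^8*(Real.sqrt 3:ℂ)^10 + (-2262)*z^8*(Real.sqrt 3:ℂ)^12 + (-330)*z^8*(Real.sqrt 3:ℂ)^14 + 12*z^8*(Real.sqrt 3:ℂ)^16 + 4476*z^9*(Real.sqrt 3:ℂ) + 11070*z^9*(Real.sqrt 3:ℂ)^3 + (-29602)*z^9*(Real.sqrt 3:ℂ)^5 + (-72682)*z^9*(Real.sqrt 3:ℂ)^7 + (-22496)*z^9*(Real.sqrt 3:ℂ)^9 + 5582*z^9*(Real.sqrt 3:ℂ)^11 + 940*z^9*(Real.sqrt 3:ℂ)^13 + (-92)*z^9*(Real.sqrt 3:ℂ)^15 + (-576)*z^10 + (-3252)*z^10*(Real.sqrt 3:ℂ)^2 + 30070*z^10*(Real.sqrt 3:ℂ)^4 + 78490*z^10*(Real.sqrt 3:ℂ)^6 + 31966*z^10*(Real.sqrt 3:ℂ)^8 + (-9732)*z^10*(Real.sqrt 3:ℂ)^10 + (-2038)*z^10*(Real.sqrt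 3:ℂ)^12 + 346*z^10*(Real.sqrt 3:ℂ)^14 + (-4)*z^10*(Real.sqrt 3:ℂ)^16 + (-1440)*z^11*(Real.sqrt 3:ℂ) + (-21428)*z^11*(Real.sqrt 3:ℂ)^3 + (-65782)*z^11*(Real.sqrt 3:ℂ)^5 + (-36402)*z^11*(Real.sqrt 3:ℂ)^7 + 11962*z^11*(Real.sqrt 3:ℂ)^9 + 3556*z^11*(Real.sqrt 3:ℂ)^11 + (-852)*z^11*(Real.sqrt 3:ℂ)^13 + 28*z^11*(Real.sqrt 3:ℂ)^15 + 576*z^12 + 10400*z^12*(Real.sqrt 3:ℂ)^2 + 40308*z^12*(Real.sqrt 3:ℂ)^4 + 32946*z^12*(Real.sqrt 3:ℂ)^6 + (-9818)*z^12*(Real.sqrt 3:ℂ)^8 + (-5014)*z^12*(Real.sqrt 3:ℂ)^10 + 1448*z^12*(Real.sqrt 3:ℂ)^12 + (-80)*z^12*(Real.sqrt 3:ℂ)^14 + (-2240)*z^13*(Real.sqrt 3:ℂ) + (-16416)*z^13*(Real.sqrt 3:ℂ)^3 + (-22284)*z^13*(Real.sqrt 3:ℂ)^5 + 4250*z^13*(Real.sqrt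 3:ℂ)^7 + 5404*z^13*(Real.sqrt 3:ℂ)^9 + (-1660)*z^13*(Real.sqrt 3:ℂ)^11 + 120*z^13*(Real.sqrt 3:ℂ)^13 + 3264*z^14*(Real.sqrt 3:ℂ)^2 + 9888*z^14*(Real.sqrt 3:ℂ)^4 + 452*z^14*(Real.sqrt 3:ℂ)^6 + (-4066)*z^14*(Real.sqrt 3:ℂ)^8 + 1218*z^14*(Real.sqrt 3:ℂ)^10 + (-100)*z^14*(Real.sqrt 3:ℂ)^12 + (-2112)*z^15*(Real.sqrt 3:ℂ)^3 + (-1472)*z^15*(Real.sqrt 3:ℂ)^5 + 1860*z^15*(Real.sqrt 3:ℂ)^7 + (-516)*z^15*(Real.sqrt 3:ℂ)^9 + 44*z^15*(Real.sqrt 3:ℂ)^11 + 512*z^16*(Real.sqrt 3:ℂ)^4 + (-384)*z^16*(Real.sqrt 3:ℂ)^6 + 96*z^16*(Real.sqrt 3:ℂ)^8 + (-8)*z^16*(Real.sqrt 3:ℂ)^10)) * hw)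
  have hc3 := comb ((2*z - (Real.sqrt 3:ℂ))^4) (-(2*z - (Real.sqrt 3:ℂ))) ((2*z - (Real.sqrt 3:ℂ))^2) (-(2*z - (Real.sqrt 3:ℂ))) (-((2*z - (Real.sqrt 3:ℂ))^2)) (2*(2*z - (Real.sqrt 3:ℂ))) (((Real.sqrt 3:ℂ)*z - 2) - (2*z - (Real.sqrt 3:ℂ))) ((((Real.sqrt 3:ℂ)*z - 2) - (2*z - (Real.sqrt 3:ℂ)))^2) (((Real.sqrt 3:ℂ)*z - 2) + (2*z - (Real.sqrt 3:ℂ))) ((((Real.sqrt 3:ℂ)*z - 2) + (2*z - (Real.sqrt 3:ℂ)))^2) ((Real.sqrt 3:ℂ)*z - 2) ((-16)) (1) (1) (1) ((-1)) (18) (2*z - (Real.sqrt 3:ℂ)) (z + 1) ((z + 1)^2) (z - 1) ((z - 1)^2) (3*z - 2*(Real.sqrt 3:ℂ))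
    (pow_ne_zero 4 nA2) n3d1 (pow_ne_zero 2 n3d1) n3d3 (pow_ne_zero 2 n3d3) nA3
    ne2d nzp1 (pow_ne_zero 2 nzp1) nzm1 (pow_ne_zero 2 nzm1) ne3d
    (by linear_combination ((576*(Real.sqrt 3:ℂ)^5 + (-256)*(Real.sqrt 3:ℂ)^7 + 28*(Real.sqrt 3:ℂ)^9 + (-5088)*z*(Real.sqrt 3:ℂ)^4 + 1504*z*(Real.sqrt 3:ℂ)^6 + 94*z*(Real.sqrt 3:ℂ)^8 + (-38)*z*(Real.sqrt 3:ℂ)^10 + 17664*z^2*(Real.sqrt 3:ℂ)^3 + (-3328)*z^2*(Real.sqrt 3:ℂ)^5 + (-960)*z^2*(Real.sqrt 3:ℂ)^7 + 124*z^2*(Real.sqrt 3:ℂ)^9 + 12*z^2*(Real.sqrt 3:ℂ)^11 + (-29952)*z^3*(Real.sqrt 3:ℂ)^2 + 8864*z^3*(Real.sqrt 3:ℂ)^4 + 1712*z^3*(Real.sqrt 3:ℂ)^6 + (-714)*z^3*(Real.sqrt 3:ℂ)^8 + 50*z^3*(Real.sqrt 3:ℂ)^10 + 24576*z^4*(Real.sqrt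 3:ℂ) + (-35072)*z^4*(Real.sqrt 3:ℂ)^3 + (-5376)*z^4*(Real.sqrt 3:ℂ)^5 + 5552*z^4*(Real.sqrt 3:ℂ)^7 + (-392)*z^4*(Real.sqrt 3:ℂ)^9 + (-52)*z^4*(Real.sqrt 3:ℂ)^11 + (-7680)*z^5 + 75008*z^5*(Real.sqrt 3:ℂ)^2 + 24352*z^5*(Real.sqrt 3:ℂ)^4 + (-18064)*z^5*(Real.sqrt 3:ℂ)^6 + 1004*z^5*(Real.sqrt 3:ℂ)^8 + 212*z^5*(Real.sqrt 3:ℂ)^10 + (-70656)*z^6*(Real.sqrt 3:ℂ) + (-35072)*z^6*(Real.sqrt 3:ℂ)^3 + 36608*z^6*(Real.sqrt 3:ℂ)^5 + (-5952)*z^6*(Real.sqrt 3:ℂ)^7 + (-328)*z^6*(Real.sqrt 3:ℂ)^9 + 88*z^6*(Real.sqrt 3:ℂ)^11 + 23040*z^7 + (-7168)*z^7*(Real.sqrt 3:ℂ)^2 + (-77664)*z^7*(Real.sqrt 3:ℂ)^4 + 23424*z^7*(Real.sqrt 3:ℂ)^6 + 1372*z^7*(Real.sqrt 3:ℂ)^8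 + (-588)*z^7*(Real.sqrt 3:ℂ)^10 + 40960*z^8*(Real.sqrt 3:ℂ) + 134656*z^8*(Real.sqrt 3:ℂ)^3 + (-45504)*z^8*(Real.sqrt 3:ℂ)^5 + (-3616)*z^8*(Real.sqrt 3:ℂ)^7 + 1772*z^8*(Real.sqrt 3:ℂ)^9 + (-72)*z^8*(Real.sqrt 3:ℂ)^11 + (-15360)*z^9 + (-122368)*z^9*(Real.sqrt 3:ℂ)^2 + 67936*z^9*(Real.sqrt 3:ℂ)^4 + 64*z^9*(Real.sqrt 3:ℂ)^6 + (-4538)*z^9*(Real.sqrt 3:ℂ)^8 + 562*z^9*(Real.sqrt 3:ℂ)^10 + 51200*z^10*(Real.sqrt 3:ℂ) + (-104704)*z^10*(Real.sqrt 3:ℂ)^3 + 7680*z^10*(Real.sqrt 3:ℂ)^5 + 10880*z^10*(Real.sqrt 3:ℂ)^7 + (-1876)*z^10*(Real.sqrt 3:ℂ)^9 + 28*z^10*(Real.sqrt 3:ℂ)^11 + (-15360)*z^11 + 109312*z^11*(Real.sqrt 3:ℂ)^2 + (-7456)*z^11*(Real.sqrt 3:ℂ)^4 + (-17360)*z^11*(Real.sqrt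 3:ℂ)^6 + 4078*z^11*(Real.sqrt 3:ℂ)^8 + (-230)*z^11*(Real.sqrt 3:ℂ)^10 + (-61440)*z^12*(Real.sqrt 3:ℂ) + 12032*z^12*(Real.sqrt 3:ℂ)^3 + 18304*z^12*(Real.sqrt 3:ℂ)^5 + (-7376)*z^12*(Real.sqrt 3:ℂ)^7 + 768*z^12*(Real.sqrt 3:ℂ)^9 + (-4)*z^12*(Real.sqrt 3:ℂ)^11 + 23040*z^13 + (-18176)*z^13*(Real.sqrt 3:ℂ)^2 + (-17568)*z^13*(Real.sqrt 3:ℂ)^4 + 10352*z^13*(Real.sqrt 3:ℂ)^6 + (-1424)*z^13*(Real.sqrt 3:ℂ)^8 + 32*z^13*(Real.sqrt 3:ℂ)^10 + 11264*z^14*(Real.sqrt 3:ℂ) + 13568*z^14*(Real.sqrt 3:ℂ)^3 + (-9728)*z^14*(Real.sqrt 3:ℂ)^5 + 1792*z^14*(Real.sqrt 3:ℂ)^7 + (-96)*z^14*(Real.sqrt 3:ℂ)^9 + (-7680)*z^15 + (-6656)*z^15*(Real.sqrt 3:ℂ)^2 + 6624*z^15*(Real.sqrt 3:ℂ)^4 +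 (-1632)*z^15*(Real.sqrt 3:ℂ)^6 + 128*z^15*(Real.sqrt 3:ℂ)^8 + 4096*z^16*(Real.sqrt 3:ℂ) + (-3072)*z^16*(Real.sqrt 3:ℂ)^3 + 768*z^16*(Real.sqrt 3:ℂ)^5 + (-64)*z^16*(Real.sqrt 3:ℂ)^7)) * hw)
  have hc4 := comb (((Real.sqrt 3:ℂ)*z - 2)^4) (-((Real.sqrt 3:ℂ)*z - 2)) (((Real.sqrt 3:ℂ)*z - 2)^2) (-((Real.sqrt 3:ℂ)*z - 2)) (-(((Real.sqrt 3:ℂ)*z - 2)^2)) (2*((Real.sqrt 3:ℂ)*z - 2)) ((z - (Real.sqrt 3:ℂ)) - ((Real.sqrt 3:ℂ)*z - 2)) (((z - (Real.sqrt 3:ℂ)) - ((Real.sqrt 3:ℂ)*z - 2))^2) ((z - (Real.sqrt 3:ℂ)) + ((Real.sqrt 3:ℂ)*z - 2)) (((z - (Real.sqrt 3:ℂ)) + ((Real.sqrt 3:ℂ)*z - 2))^2) (z - (Real.sqrt 3:ℂ)) ((-18)) (4) (4) (4) ((-4)) (2) (3*z - 2*(Real.sqrt 3:ℂ)) (2*z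 + 1 - (Real.sqrt 3:ℂ)) ((2*z + 1 - (Real.sqrt 3:ℂ))^2) (2*z - 1 - (Real.sqrt 3:ℂ)) ((2*z - 1 - (Real.sqrt 3:ℂ))^2) (z - (Real.sqrt 3:ℂ))
    (pow_ne_zero 4 nA3) n4d1 (pow_ne_zero 2 n4d1) n4d3 (pow_ne_zero 2 n4d3) nA4
    ne3d ne1c (pow_ne_zero 2 ne1c) ne1b (pow_ne_zero 2 ne1b) nA4
    (by linear_combination (((-4608)*(Real.sqrt 3:ℂ)^2 + (-512)*(Real.sqrt 3:ℂ)^4 + 8480*(Real.sqrt 3:ℂ)^6 + (-3936)*(Real.sqrt 3:ℂ)^8 + 608*(Real.sqrt 3:ℂ)^10 + (-32)*(Real.sqrt 3:ℂ)^12 + 8448*z*(Real.sqrt 3:ℂ) + 21760*z*(Real.sqrt 3:ℂ)^3 + (-69008)*z*(Real.sqrt 3:ℂ)^5 + 6896*z*(Real.sqrt 3:ℂ)^7 + 5264*z*(Real.sqrt 3:ℂ)^9 + (-1072)*z*(Real.sqrt 3:ℂ)^11 + 64*z*(Real.sqrt 3:ℂ)^13 + (-3840)*z^2 + (-36224)*z^2*(Real.sqrt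 3:ℂ)^2 + 211056*z^2*(Real.sqrt 3:ℂ)^4 + 96440*z^2*(Real.sqrt 3:ℂ)^6 + (-31192)*z^2*(Real.sqrt 3:ℂ)^8 + (-1896)*z^2*(Real.sqrt 3:ℂ)^10 + 712*z^2*(Real.sqrt 3:ℂ)^12 + (-48)*z^2*(Real.sqrt 3:ℂ)^14 + 14976*z^3*(Real.sqrt 3:ℂ) + (-429408)*z^3*(Real.sqrt 3:ℂ)^3 + (-485576)*z^3*(Real.sqrt 3:ℂ)^5 + (-36268)*z^3*(Real.sqrt 3:ℂ)^7 + 30340*z^3*(Real.sqrt 3:ℂ)^9 + (-52)*z^3*(Real.sqrt 3:ℂ)^11 + (-268)*z^3*(Real.sqrt 3:ℂ)^13 + 16*z^3*(Real.sqrt 3:ℂ)^15 + 516672*z^4*(Real.sqrt 3:ℂ)^2 + 1086448*z^4*(Real.sqrt 3:ℂ)^4 + 486356*z^4*(Real.sqrt 3:ℂ)^6 + (-4750)*z^4*(Real.sqrt 3:ℂ)^8 + (-17388)*z^4*(Real.sqrt 3:ℂ)^10 + 272*z^4*(Real.sqrt 3:ℂ)^12 + 104*z^4*(Real.sqrt 3:ℂ)^14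 + (-2)*z^4*(Real.sqrt 3:ℂ)^16 + (-314832)*z^5*(Real.sqrt 3:ℂ) + (-1193600)*z^5*(Real.sqrt 3:ℂ)^3 + (-1200088)*z^5*(Real.sqrt 3:ℂ)^5 + (-341694)*z^5*(Real.sqrt 3:ℂ)^7 + 9480*z^5*(Real.sqrt 3:ℂ)^9 + 7244*z^5*(Real.sqrt 3:ℂ)^11 + (-264)*z^5*(Real.sqrt 3:ℂ)^13 + (-38)*z^5*(Real.sqrt 3:ℂ)^15 + 77040*z^6 + 549208*z^6*(Real.sqrt 3:ℂ)^2 + 1168448*z^6*(Real.sqrt 3:ℂ)^4 + 885108*z^6*(Real.sqrt 3:ℂ)^6 + 190648*z^6*(Real.sqrt 3:ℂ)^8 + (-6150)*z^6*(Real.sqrt 3:ℂ)^10 + (-2102)*z^6*(Real.sqrt 3:ℂ)^12 + 98*z^6*(Real.sqrt 3:ℂ)^14 + 6*z^6*(Real.sqrt 3:ℂ)^16 + 9400*z^7*(Real.sqrt 3:ℂ) + (-228796)*z^7*(Real.sqrt 3:ℂ)^3 + (-726720)*z^7*(Real.sqrt 3:ℂ)^5 + (-496256)*z^7*(Real.sqrt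 3:ℂ)^7 + (-77934)*z^7*(Real.sqrt 3:ℂ)^9 + 3158*z^7*(Real.sqrt 3:ℂ)^11 + 630*z^7*(Real.sqrt 3:ℂ)^13 + 6*z^7*(Real.sqrt 3:ℂ)^15 + (-65280)*z^8 + (-334924)*z^8*(Real.sqrt 3:ℂ)^2 + (-136758)*z^8*(Real.sqrt 3:ℂ)^4 + 349264*z^8*(Real.sqrt 3:ℂ)^6 + 208758*z^8*(Real.sqrt 3:ℂ)^8 + 22188*z^8*(Real.sqrt 3:ℂ)^10 + (-1626)*z^8*(Real.sqrt 3:ℂ)^12 + (-240)*z^8*(Real.sqrt 3:ℂ)^14 + (-6)*z^8*(Real.sqrt 3:ℂ)^16 + 159072*z^9*(Real.sqrt 3:ℂ) + 483090*z^9*(Real.sqrt 3:ℂ)^3 + 204400*z^9*(Real.sqrt 3:ℂ)^5 + (-136490)*z^9*(Real.sqrt 3:ℂ)^7 + (-68548)*z^9*(Real.sqrt 3:ℂ)^9 + (-4574)*z^9*(Real.sqrt 3:ℂ)^11 + 548*z^9*(Real.sqrt 3:ℂ)^13 + 38*z^9*(Real.sqrt 3:ℂ)^15 + 11520*z^10 +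 (-151440)*z^10*(Real.sqrt 3:ℂ)^2 + (-365744)*z^10*(Real.sqrt 3:ℂ)^4 + (-123614)*z^10*(Real.sqrt 3:ℂ)^6 + 52018*z^10*(Real.sqrt 3:ℂ)^8 + 20604*z^10*(Real.sqrt 3:ℂ)^10 + 1148*z^10*(Real.sqrt 3:ℂ)^12 + (-14)*z^10*(Real.sqrt 3:ℂ)^14 + 2*z^10*(Real.sqrt 3:ℂ)^16 + (-34176)*z^11*(Real.sqrt 3:ℂ) + 86024*z^11*(Real.sqrt 3:ℂ)^3 + 194530*z^11*(Real.sqrt 3:ℂ)^5 + 40050*z^11*(Real.sqrt 3:ℂ)^7 + (-23260)*z^11*(Real.sqrt 3:ℂ)^9 + (-6340)*z^11*(Real.sqrt 3:ℂ)^11 + (-486)*z^11*(Real.sqrt 3:ℂ)^13 + (-22)*z^11*(Real.sqrt 3:ℂ)^15 + 38336*z^12*(Real.sqrt 3:ℂ)^2 + (-43356)*z^12*(Real.sqrt 3:ℂ)^4 + (-75228)*z^12*(Real.sqrt 3:ℂ)^6 + (-1736)*z^12*(Real.sqrt 3:ℂ)^8 + 9272*z^12*(Real.sqrt 3:ℂ)^10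 + 1700*z^12*(Real.sqrt 3:ℂ)^12 + 100*z^12*(Real.sqrt 3:ℂ)^14 + 512*z^13*(Real.sqrt 3:ℂ) + (-22176)*z^13*(Real.sqrt 3:ℂ)^3 + 20544*z^13*(Real.sqrt 3:ℂ)^5 + 18832*z^13*(Real.sqrt 3:ℂ)^7 + (-3856)*z^13*(Real.sqrt 3:ℂ)^9 + (-2480)*z^13*(Real.sqrt 3:ℂ)^11 + (-240)*z^13*(Real.sqrt 3:ℂ)^13 + (-768)*z^14*(Real.sqrt 3:ℂ)^2 + 7680*z^14*(Real.sqrt 3:ℂ)^4 + (-7168)*z^14*(Real.sqrt 3:ℂ)^6 + (-2368)*z^14*(Real.sqrt 3:ℂ)^8 + 1536*z^14*(Real.sqrt 3:ℂ)^10 + 320*z^14*(Real.sqrt 3:ℂ)^12 + 384*z^15*(Real.sqrt 3:ℂ)^3 + (-1696)*z^15*(Real.sqrt 3:ℂ)^5 + 1632*z^15*(Real.sqrt 3:ℂ)^7 + (-96)*z^15*(Real.sqrt 3:ℂ)^9 + (-224)*z^15*(Real.sqrt 3:ℂ)^11 + (-64)*z^16*(Real.sqrt 3:ℂ)^4 +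 192*z^16*(Real.sqrt 3:ℂ)^6 + (-192)*z^16*(Real.sqrt 3:ℂ)^8 + 64*z^16*(Real.sqrt 3:ℂ)^10)) * hw)
  have hc5 := comb ((z - (Real.sqrt 3:ℂ))^4) (-(z - (Real.sqrt 3:ℂ))) ((z - (Real.sqrt 3:ℂ))^2) (-(z - (Real.sqrt 3:ℂ))) (-((z - (Real.sqrt 3:ℂ))^2)) (2*(z - (Real.sqrt 3:ℂ))) ((-1) - (z - (Real.sqrt 3:ℂ))) (((-1) - (z - (Real.sqrt 3:ℂ)))^2) ((-1) + (z - (Real.sqrt 3:ℂ))) (((-1) + (z - (Real.sqrt 3:ℂ)))^2) (-1) ((-2)) (1) (1) (1) ((-1)) (0) (z - (Real.sqrt 3:ℂ)) (z + 1 - (Real.sqrt 3:ℂ)) ((z + 1 - (Real.sqrt 3:ℂ))^2) (z - 1 - (Real.sqrt 3:ℂ)) ((z - 1 - (Real.sqrt 3:ℂ))^2) (1)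
    (pow_ne_zero 4 nA4) n5d1 (pow_ne_zero 2 n5d1) n5d3 (pow_ne_zero 2 n5d3) nonem1
    nA4 ne2c (pow_ne_zero 2 ne2c) ne2b (pow_ne_zero 2 ne2b) none1
    (by ring)
  have hc0 := comb ((z)^4) (-(z)) ((z)^2) (-(z)) (-((z)^2)) (2*(z)) ((-1) - (z)) (((-1) - (z))^2) ((-1) + (z)) (((-1) + (z))^2) (-1) ((-2)) (1) ((-1)) (1) (1) (0) (z) (z - 1) ((z - 1)^2) (z + 1) ((z + 1)^2) (1)
    (pow_ne_zero 4 nB0) n0d1 (pow_ne_zero 2 n0d1) n0d3 (pow_ne_zero 2 n0d3) nonem1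
    nB0 nzm1 (pow_ne_zero 2 nzm1) nzp1 (pow_ne_zero 2 nzp1) none1
    (by ring)
  constructor
  · rw [show (z:ℂ) ^ (-4:ℤ) = (z^4)⁻¹ by rw [zpow_neg, show ((4:ℤ)) = ((4:ℕ):ℤ) by norm_num, zpow_natCast]]
    rw [hq (-1/z), qAB (-1) z nB0, hc0, hq z]
    ring
  · have s0 : slash 2 (U^0) q z = q z := by
      rw [pow_zero]; norm_num [slash, Matrix.one_apply]
    have s1 : slash 2 (U^1) q z = ((z)^4)⁻¹ * q (((Real.sqrt 3:ℂ)*z - 1)/(z)) := by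
      rw [pow_one, hU]
      norm_num [slash, Matrix.cons_val_zero, Matrix.cons_val_one, Matrix.head_cons,
        zpow_neg, sub_eq_add_neg]
    have s2 : slash 2 (U^2) q z = (((Real.sqrt 3:ℂ)*z - 1)^4)⁻¹ * q ((2*z - (Real.sqrt 3:ℂ))/((Real.sqrt 3:ℂ)*z - 1)) := by
      rw [hU2]
      norm_num [slash, Matrix.cons_val_zero, Matrix.cons_val_one, Matrix.head_cons,
        zpow_neg, sub_eq_add_neg]
    have s3 : slash 2 (U^3) q z = ((2*z - (Real.sqrt 3:ℂ))^4)⁻¹ * q (((Real.sqrt 3:ℂ)*z - 2)/(2*z - (Real.sqrt 3:ℂ))) := by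
      rw [hU3]
      norm_num [slash, Matrix.cons_val_zero, Matrix.cons_val_one, Matrix.head_cons,
        zpow_neg, sub_eq_add_neg]
    have s4 : slash 2 (U^4) q z = (((Real.sqrt 3:ℂ)*z - 2)^4)⁻¹ * q ((z - (Real.sqrt 3:ℂ))/((Real.sqrt 3:ℂ)*z - 2)) := by
      rw [hU4]
      norm_num [slash, Matrix.cons_val_zero, Matrix.cons_val_one, Matrix.head_cons,
        zpow_neg, sub_eq_add_neg]
    have s5 : slash 2 (U^5) q z = ((z - (Real.sqrt 3:ℂ))^4)⁻¹ * q ((-1)/(z - (Real.sqrt 3:ℂ))) := by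
      rw [hU5]
      norm_num [slash, Matrix.cons_val_zero, Matrix.cons_val_one, Matrix.head_cons,
        zpow_neg, sub_eq_add_neg]
    rw [Finset.sum_range_succ, Finset.sum_range_succ, Finset.sum_range_succ,
      Finset.sum_range_succ, Finset.sum_range_succ, Finset.sum_range_succ,
      Finset.sum_range_zero, s0, s1, s2, s3, s4, s5]
    rw [hq (((Real.sqrt 3:ℂ)*z - 1)/(z)), qAB ((Real.sqrt 3:ℂ)*z - 1) (z) nB0, hc1]
    rw [hq ((2*z - (Real.sqrt 3:ℂ))/((Real.sqrt 3:ℂ)*z - 1)), qAB (2*z - (Real.sqrt 3:ℂ)) ((Real.sqrt 3:ℂ)*z - 1) nA1, hc2]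
    rw [hq (((Real.sqrt 3:ℂ)*z - 2)/(2*z - (Real.sqrt 3:ℂ))), qAB ((Real.sqrt 3:ℂ)*z - 2) (2*z - (Real.sqrt 3:ℂ)) nA2, hc3]
    rw [hq ((z - (Real.sqrt 3:ℂ))/((Real.sqrt 3:ℂ)*z - 2)), qAB (z - (Real.sqrt 3:ℂ)) ((Real.sqrt 3:ℂ)*z - 2) nA3, hc4]
    rw [hq ((-1)/(z - (Real.sqrt 3:ℂ))), qAB (-1) (z - (Real.sqrt 3:ℂ)) nA4, hc5]
    rw [hq z]
    ring
end

section
/- Let p = 6 and λ = 2cos(π/6) = √3, so U = ((√3,-1),(1,0)), and let k be an odd positive integer. Define q(z) = (√3·z² - 4z - √3)^{-k} + (√3·z² + 2z - 2√3)^{-k} + (2√3·z² + 2z - √3)^{-k}. Then q satisfies the rational period function relations of weight 2k on the Hecke group G_6: for every z ∈ ℂ with Im z ≠ 0, q(z) + z^{-2k}·q(-1/z) = 0 and Σ_{j=0}^{5} (q |_{2k} U^j)(z) = 0. (Its poles form the Hecke-symmetric irreducible system of poles with three positive poles (2+√7)/√3, (-1+√7)/√3, (-1+√7)/(2√3) and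 their T-images, corresponding to the conjugacy class of V₁V₃V₅.) -/
/-- Let `p = 6` and `λ = 2cos(π/6) = √3`, so `U = ((√3,-1),(1,0))`,
and let `k` be an odd positive integer.  Define
`q(z) = (√3·z² - 4z - √3)^{-k} + (√3·z² + 2z - 2√3)^{-k} + (2√3·z² + 2z - √3)^{-k}`.
Then `q` satisfies the rational period function relations of weight `2k` on the
Hecke group `G_6`: for every `z ∈ ℂ` with `Im z ≠ 0`,
`q(z) + z^{-2k}·q(-1/z) = 0` and `Σ_{j=0}^{5} (q ∣_{2k} U^j)(z) = 0`. -/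
theorem stmt17
    (lam : ℝ) (hlam : lam = 2 * Real.cos (Real.pi / 6))
    (U : Matrix (Fin 2) (Fin 2) ℝ) (hU : U = !![lam, -1; 1, 0])
    (k : ℕ) (hk : 0 < k) (hkodd : Odd k)
    (q : ℂ → ℂ)
    (hq : ∀ z : ℂ, q z =
      ((Real.sqrt 3 : ℂ) * z ^ 2 - 4 * z - (Real.sqrt 3 : ℂ)) ^ (-(k : ℤ)) +
      ((Real.sqrt 3 : ℂ) * z ^ 2 + 2 * z - 2 * (Real.sqrt 3 : ℂ)) ^ (-(k : ℤ)) +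
      (2 * (Real.sqrt 3 : ℂ) * z ^ 2 + 2 * z - (Real.sqrt 3 : ℂ)) ^ (-(k : ℤ))) :
    ∀ z : ℂ, z.im ≠ 0 →
      q z + z ^ (-(2 * (k : ℤ))) * q (-1 / z) = 0 ∧
      ∑ j ∈ Finset.range 6, slash k (U ^ j) q z = 0 := by
  intro z hz
  have hz0 : z ≠ 0 := fun h => hz (by simp [h])
  have hs : (Real.sqrt 3 : ℂ) ^ 2 = 3 := by
    norm_cast
    rw [Real.sq_sqrt] <;> norm_num
  have hs3 : Real.sqrt 3 * Real.sqrt 3 = 3 := Real.mul_self_sqrt (by norm_num)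
  have hsr0 : Real.sqrt 3 ≠ 0 := by positivity
  have hneg : ∀ w : ℂ, (-w) ^ (-(k : ℤ)) = -(w ^ (-(k : ℤ))) := by
    intro w
    rw [zpow_neg, zpow_neg, zpow_natCast, zpow_natCast, hkodd.neg_pow, inv_neg]
  have hpow2 : ∀ w : ℂ, w ^ (-(2 * (k : ℤ))) = (w ^ 2) ^ (-(k : ℤ)) := by
    intro w
    have h1 : (2 * (k : ℤ)) = ((2 * k : ℕ) : ℤ) := by push_cast; ring
    rw [h1, zpow_neg, zpow_neg, zpow_natCast, zpow_natCast, pow_mul]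
  have him : ∀ c d : ℝ, c ≠ 0 → (c : ℂ) * z + (d : ℂ) ≠ 0 := by
    intro c d hc h
    have h2 : c * z.im = 0 := by simpa using congrArg Complex.im h
    rcases mul_eq_zero.mp h2 with h3 | h3
    · exact hc h3
    · exact hz h3
  have hlam3 : lam = Real.sqrt 3 := by rw [hlam, Real.cos_pi_div_six]; ring
  have hU1 : U = !![Real.sqrt 3, -1; 1, 0] := by rw [hU, hlam3]
  have hU2 : U ^ 2 = !![2, -Real.sqrt 3; Real.sqrt 3, -1] := by
    rw [pow_two, hU1, Matrix.mul_fin_two]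
    ext i j
    fin_cases i <;> fin_cases j <;> simp <;> nlinarith [hs3]
  have hU3 : U ^ 3 = !![Real.sqrt 3, -2; 2, -Real.sqrt 3] := by
    rw [pow_succ, hU2, hU1, Matrix.mul_fin_two]
    ext i j
    fin_cases i <;> fin_cases j <;> simp <;> nlinarith [hs3]
  have hU4 : U ^ 4 = !![1, -Real.sqrt 3; Real.sqrt 3, -2] := by
    rw [pow_succ, hU3, hU1, Matrix.mul_fin_two]
    ext i j
    fin_cases i <;> fin_cases j <;> simp <;> nlinarith [hs3]
  have hU5 : U ^ 5 = !![0, -1; 1, -Real.sqrt 3] := by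
    rw [pow_succ, hU4, hU1, Matrix.mul_fin_two]
    ext i j
    fin_cases i <;> fin_cases j <;> simp <;> nlinarith [hs3]
  have hU0 : U ^ 0 = !![(1 : ℝ), 0; 0, 1] := by rw [pow_zero, Matrix.one_fin_two]
  have key : ∀ (a b c d : ℝ) (E1 E2 E3 : ℂ),
      (c : ℂ) * z + (d : ℂ) ≠ 0 →
      (Real.sqrt 3 : ℂ) * ((a : ℂ) * z + (b : ℂ)) ^ 2 - 4 * (((a : ℂ) * z + (b : ℂ)) * ((c : ℂ) * z + (d : ℂ))) - (Real.sqrt 3 : ℂ) * ((c : ℂ) * z + (d : ℂ)) ^ 2 = E1 →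
      (Real.sqrt 3 : ℂ) * ((a : ℂ) * z + (b : ℂ)) ^ 2 + 2 * (((a : ℂ) * z + (b : ℂ)) * ((c : ℂ) * z + (d : ℂ))) - 2 * (Real.sqrt 3 : ℂ) * ((c : ℂ) * z + (d : ℂ)) ^ 2 = E2 →
      2 * (Real.sqrt 3 : ℂ) * ((a : ℂ) * z + (b : ℂ)) ^ 2 + 2 * (((a : ℂ) * z + (b : ℂ)) * ((c : ℂ) * z + (d : ℂ))) - (Real.sqrt 3 : ℂ) * ((c : ℂ) * z + (d : ℂ)) ^ 2 = E3 →
      slash k !![a, b; c, d] q z = E1 ^ (-(k : ℤ)) + E2 ^ (-(k : ℤ)) + E3 ^ (-(k : ℤ)) := by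
    intro a b c d E1 E2 E3 hD h1 h2 h3
    have hsl : slash k !![a, b; c, d] q z =
        ((c : ℂ) * z + (d : ℂ)) ^ (-(2 * (k : ℤ))) *
          q (((a : ℂ) * z + (b : ℂ)) / ((c : ℂ) * z + (d : ℂ))) := by
      simp [slash]
    have e1 : ((c : ℂ) * z + (d : ℂ)) ^ 2 *
        ((Real.sqrt 3 : ℂ) * (((a : ℂ) * z + (b : ℂ)) / ((c : ℂ) * z + (d : ℂ))) ^ 2 - 4 * (((a : ℂ) * z + (b : ℂ)) / ((c : ℂ) * z + (d : ℂ))) - (Real.sqrt 3 : ℂ)) = E1 := by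
      rw [← h1]; field_simp
    have e2 : ((c : ℂ) * z + (d : ℂ)) ^ 2 *
        ((Real.sqrt 3 : ℂ) * (((a : ℂ) * z + (b : ℂ)) / ((c : ℂ) * z + (d : ℂ))) ^ 2 + 2 * (((a : ℂ) * z + (b : ℂ)) / ((c : ℂ) * z + (d : ℂ))) - 2 * (Real.sqrt 3 : ℂ)) = E2 := by
      rw [← h2]; field_simp
    have e3 : ((c : ℂ) * z + (d : ℂ)) ^ 2 *
        (2 * (Real.sqrt 3 : ℂ) * (((a : ℂ) * z + (b : ℂ)) / ((c : ℂ) * z + (d : ℂ))) ^ 2 + 2 * (((a : ℂ) * z + (b : ℂ)) / ((c : ℂ) * z + (d : ℂ))) - (Real.sqrt 3 : ℂ)) = E3 := by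
      rw [← h3]; field_simp
    rw [hsl, hq, hpow2, mul_add, mul_add, ← mul_zpow, ← mul_zpow, ← mul_zpow, e1, e2, e3]
  constructor
  · have f1 : z ^ 2 * ((Real.sqrt 3 : ℂ) * (-1 / z) ^ 2 - 4 * (-1 / z) - (Real.sqrt 3 : ℂ)) = -((Real.sqrt 3 : ℂ) * z ^ 2 - 4 * z - (Real.sqrt 3 : ℂ)) := by
      field_simp; ring
    have f2 : z ^ 2 * ((Real.sqrt 3 : ℂ) * (-1 / z) ^ 2 + 2 * (-1 / z) - 2 * (Real.sqrt 3 : ℂ)) = -(2 * (Real.sqrt 3 : ℂ) * z ^ 2 + 2 * z - (Real.sqrt 3 : ℂ)) := by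
      field_simp; ring
    have f3 : z ^ 2 * (2 * (Real.sqrt 3 : ℂ) * (-1 / z) ^ 2 + 2 * (-1 / z) - (Real.sqrt 3 : ℂ)) = -((Real.sqrt 3 : ℂ) * z ^ 2 + 2 * z - 2 * (Real.sqrt 3 : ℂ)) := by
      field_simp; ring
    rw [hq z, hq (-1 / z), hpow2 z, mul_add, mul_add, ← mul_zpow, ← mul_zpow, ← mul_zpow,
      f1, f2, f3, hneg, hneg, hneg]
    ring
  · rw [Finset.sum_range_succ, Finset.sum_range_succ, Finset.sum_range_succ,
      Finset.sum_range_succ, Finset.sum_range_succ, Finset.sum_range_one,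
      hU5, hU4, hU3, hU2, hU0, pow_one, hU1]
    rw [key (1) (0) (0) (1) ((Real.sqrt 3 : ℂ) * z ^ 2 - 4 * z - (Real.sqrt 3 : ℂ)) ((Real.sqrt 3 : ℂ) * z ^ 2 + 2 * z - 2 * (Real.sqrt 3 : ℂ)) (2 * (Real.sqrt 3 : ℂ) * z ^ 2 + 2 * z - (Real.sqrt 3 : ℂ)) (by push_cast; norm_num)
      (by push_cast; ring)
      (by push_cast; ring)
      (by push_cast; ring)]
    rw [key (Real.sqrt 3) (-1) (1) (0) (-(2 * (Real.sqrt 3 : ℂ) * z ^ 2 + 2 * z - (Real.sqrt 3 : ℂ))) (3 * (Real.sqrt 3 : ℂ) * z ^ 2 - 8 * z + (Real.sqrt 3 : ℂ)) (7 * (Real.sqrt 3 : ℂ) * z ^ 2 - 14 * z + 2 * (Real.sqrt 3 : ℂ)) (him 1 0 one_ne_zero)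
      (by push_cast; linear_combination ((Real.sqrt 3 : ℂ)*z^2 - 2*z) * hs)
      (by push_cast; linear_combination ((Real.sqrt 3 : ℂ)*z^2 - 2*z) * hs)
      (by push_cast; linear_combination (2*(Real.sqrt 3 : ℂ)*z^2 - 4*z) * hs)]
    rw [key (2) (-Real.sqrt 3) (Real.sqrt 3) (-1) (-(7 * (Real.sqrt 3 : ℂ) * z ^ 2 - 14 * z + 2 * (Real.sqrt 3 : ℂ))) (2 * (Real.sqrt 3 : ℂ) * z ^ 2 - 10 * z + 3 * (Real.sqrt 3 : ℂ)) (9 * (Real.sqrt 3 : ℂ) * z ^ 2 - 28 * z + 7 * (Real.sqrt 3 : ℂ)) (him (Real.sqrt 3) (-1) hsr0)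
      (by push_cast; linear_combination (-(Real.sqrt 3 : ℂ)*z^2 + (Real.sqrt 3 : ℂ) + 2*z) * hs)
      (by push_cast; linear_combination (-2*(Real.sqrt 3 : ℂ)*z^2 + (Real.sqrt 3 : ℂ) - 2*z) * hs)
      (by push_cast; linear_combination (-(Real.sqrt 3 : ℂ)*z^2 + 2*(Real.sqrt 3 : ℂ) - 8*z) * hs)]
    rw [key (Real.sqrt 3) (-2) (2) (-Real.sqrt 3) (-(9 * (Real.sqrt 3 : ℂ) * z ^ 2 - 28 * z + 7 * (Real.sqrt 3 : ℂ))) (-((Real.sqrt 3 : ℂ) * z ^ 2 + 2 * z - 2 * (Real.sqrt 3 : ℂ))) (6 * (Real.sqrt 3 : ℂ) * z ^ 2 - 26 * z + 9 * (Real.sqrt 3 : ℂ)) (him 2 (-Real.sqrt 3) two_ne_zero)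
      (by push_cast; linear_combination ((Real.sqrt 3 : ℂ)*z^2 - (Real.sqrt 3 : ℂ) + 4*z) * hs)
      (by push_cast; linear_combination ((Real.sqrt 3 : ℂ)*z^2 - 2*(Real.sqrt 3 : ℂ) + 2*z) * hs)
      (by push_cast; linear_combination (2*(Real.sqrt 3 : ℂ)*z^2 - (Real.sqrt 3 : ℂ) - 6*z) * hs)]
    rw [key (1) (-Real.sqrt 3) (Real.sqrt 3) (-2) (-(6 * (Real.sqrt 3 : ℂ) * z ^ 2 - 26 * z + 9 * (Real.sqrt 3 : ℂ))) (-(3 * (Real.sqrt 3 : ℂ) * z ^ 2 - 8 * z + (Real.sqrt 3 : ℂ))) ((Real.sqrt 3 : ℂ) * z ^ 2 - 10 * z + 6 * (Real.sqrt 3 : ℂ)) (him (Real.sqrt 3) (-2) hsr0)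
      (by push_cast; linear_combination (-(Real.sqrt 3 : ℂ)*z^2 + (Real.sqrt 3 : ℂ) + 6*z) * hs)
      (by push_cast; linear_combination (-2*(Real.sqrt 3 : ℂ)*z^2 + (Real.sqrt 3 : ℂ) + 4*z) * hs)
      (by push_cast; linear_combination (-(Real.sqrt 3 : ℂ)*z^2 + 2*(Real.sqrt 3 : ℂ) - 2*z) * hs)]
    rw [key (0) (-1) (1) (-Real.sqrt 3) (-((Real.sqrt 3 : ℂ) * z ^ 2 - 10 * z + 6 * (Real.sqrt 3 : ℂ))) (-(2 * (Real.sqrt 3 : ℂ) * z ^ 2 - 10 * z + 3 * (Real.sqrt 3 : ℂ))) (-((Real.sqrt 3 : ℂ) * z ^ 2 - 4 * z - (Real.sqrt 3 : ℂ))) (him 1 (-Real.sqrt 3) one_ne_zero)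
      (by push_cast; linear_combination (-(Real.sqrt 3 : ℂ) + 2*z) * hs)
      (by push_cast; linear_combination (-2*(Real.sqrt 3 : ℂ) + 4*z) * hs)
      (by push_cast; linear_combination (-(Real.sqrt 3 : ℂ) + 2*z) * hs)]
    simp only [hneg]
    ring
end
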